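/- arXiv:2505.06955 — 2 statements merged into one kernel-verified Lean document; each statement's English description precedes it below -/
import Mathlib

section
/- n-qubit quantum one-time pad: for any density matrix ρ on (ℂ²)^⊗n, (1/4^n) Σ_{a,b ∈ {0,1}^n} X^a Z^b ρ (X^a Z^b)† = I/2^n, where X^a = X^{a₁} ⊗ ⋯ ⊗ X^{aₙ} and similarly for Z^b. -/
noncomputable section

open Finset Matrix ComplexOrder

def X : Matrix (Fin 2) (Fin 2) ℂ := !![0, 1; 1, 0]
def Z : Matrix (Fin 2) (Fin 2) ℂ := !![1, 0; 0, -1]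

/-- The tensor (Kronecker) product `X^{a₁} ⊗ ⋯ ⊗ X^{aₙ}` for a bit string `a`. -/
def Xpow {n : ℕ} (a : Fin n → Fin 2) :
    Matrix (Fin n → Fin 2) (Fin n → Fin 2) ℂ :=
  fun i j => ∏ k, (X ^ ((a k : ℕ))) (i k) (j k)

/-- The tensor (Kronecker) product `Z^{b₁} ⊗ ⋯ ⊗ Z^{bₙ}` for a bit string `b`. -/
def Zpow {n : ℕ} (b : Fin n → Fin 2) :
    Matrix (Fin n → Fin 2) (Fin n → Fin 2) ℂ :=
  fun i j => ∏ k, (Z ^ ((b k : ℕ))) (i k) (j k)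

lemma X_pow_apply (c i j : Fin 2) : (X ^ (c:ℕ)) i j = if j = i + c then 1 else 0 := by
  fin_cases c <;> fin_cases i <;> fin_cases j <;>
    simp [X, pow_succ, pow_zero, Matrix.one_apply]

lemma Z_pow_apply (c i j : Fin 2) :
    (Z ^ (c:ℕ)) i j = if i = j then (-1:ℂ) ^ ((c:ℕ) * (i:ℕ)) else 0 := by
  fin_cases c <;> fin_cases i <;> fin_cases j <;>
    simp [Z, pow_succ, pow_zero, Matrix.one_apply]

/-- sign function -/
def eps {n : ℕ} (b v : Fin n → Fin 2) : ℂ := ∏ k, (-1:ℂ) ^ ((b k : ℕ) * (v k : ℕ))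

lemma Xpow_apply {n : ℕ} (a i j : Fin n → Fin 2) :
    Xpow a i j = if j = i + a then 1 else 0 := by
  unfold Xpow
  simp only [X_pow_apply]
  rw [Finset.prod_boole]
  congr 1
  simp [funext_iff, Pi.add_apply, eq_iff_iff]

lemma Zpow_apply {n : ℕ} (b i j : Fin n → Fin 2) :
    Zpow b i j = if i = j then eps b i else 0 := by
  unfold Zpow eps
  by_cases h : i = j
  · subst h; simp [Z_pow_apply]
  · simp only [if_neg h]
    obtain ⟨k, hk⟩ := Function.ne_iff.mp h
    refine Finset.prod_eq_zero (Finset.mem_univ k) ?_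
    rw [Z_pow_apply, if_neg hk]

lemma U_apply {n : ℕ} (a b i j : Fin n → Fin 2) :
    (Xpow a * Zpow b) i j = if j = i + a then eps b j else 0 := by
  rw [Matrix.mul_apply]
  rw [Finset.sum_eq_single (i + a)]
  · rw [Xpow_apply, if_pos rfl, one_mul, Zpow_apply]
    by_cases h : j = i + a
    · subst h; simp
    · rw [if_neg (fun h' => h h'.symm), if_neg h]
  · intro m _ hm
    rw [Xpow_apply, if_neg hm, zero_mul]
  · simp

lemma star_eps {n : ℕ} (b v : Fin n → Fin 2) : star (eps b v) = eps b v := by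
  unfold eps
  simp

lemma sandwich_apply {n : ℕ} (a b : Fin n → Fin 2)
    (ρ : Matrix (Fin n → Fin 2) (Fin n → Fin 2) ℂ) (i j : Fin n → Fin 2) :
    ((Xpow a * Zpow b) * ρ * (Xpow a * Zpow b)ᴴ) i j
      = eps b (i + a) * eps b (j + a) * ρ (i + a) (j + a) := by
  rw [Matrix.mul_apply]
  rw [Finset.sum_eq_single (j + a)]
  · rw [Matrix.conjTranspose_apply, U_apply, if_pos rfl]
    rw [star_eps]
    rw [Matrix.mul_apply]
    rw [Finset.sum_eq_single (i + a)]
    · rw [U_apply, if_pos rfl]; ring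
    · intro m _ hm; rw [U_apply, if_neg hm, zero_mul]
    · simp
  · intro l _ hl
    simp [Matrix.conjTranspose_apply, U_apply, if_neg hl]
  · simp

lemma sum_eps {n : ℕ} (u v : Fin n → Fin 2) :
    (∑ b : Fin n → Fin 2, eps b u * eps b v) = if u = v then (2:ℂ)^n else 0 := by
  have h1 : ∀ b : Fin n → Fin 2, eps b u * eps b v
      = ∏ k, ((-1:ℂ)^((b k : ℕ)*(u k : ℕ)) * (-1:ℂ)^((b k : ℕ)*(v k : ℕ))) := by
    intro b; unfold eps; rw [Finset.prod_mul_distrib]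
  simp only [h1]
  have hps := Finset.prod_univ_sum (fun _ : Fin n => (Finset.univ : Finset (Fin 2)))
    (fun k c => ((-1:ℂ))^((c:ℕ)*(u k:ℕ)) * (-1:ℂ)^((c:ℕ)*(v k:ℕ)))
  rw [← Fintype.piFinset_univ, ← hps]
  have h2 : ∀ k, (∑ c : Fin 2, ((-1:ℂ))^((c:ℕ)*(u k:ℕ)) * (-1:ℂ)^((c:ℕ)*(v k:ℕ)))
      = if u k = v k then 2 else 0 := by
    intro k
    generalize u k = x; generalize v k = y
    fin_cases x <;> fin_cases y <;> simp [Fin.sum_univ_two] <;> norm_num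
  simp only [h2]
  by_cases h : u = v
  · subst h; simp
  · rw [if_neg h]
    obtain ⟨k, hk⟩ := Function.ne_iff.mp h
    exact Finset.prod_eq_zero (Finset.mem_univ k) (if_neg hk)

/-- the `n`-qubit quantum one-time pad completely randomizes any state. -/
theorem qotp_n_qubit (n : ℕ) (ρ : Matrix (Fin n → Fin 2) (Fin n → Fin 2) ℂ)
    (hpos : ρ.PosSemidef) (htr : ρ.trace = 1) :
    ((1 : ℂ) / 4 ^ n) • ∑ a : Fin n → Fin 2, ∑ b : Fin n → Fin 2,
        (Xpow a * Zpow b) * ρ * (Xpow a * Zpow b)ᴴ =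
      ((1 : ℂ) / 2 ^ n) • (1 : Matrix (Fin n → Fin 2) (Fin n → Fin 2) ℂ) := by
  ext i j
  simp only [Matrix.smul_apply, Matrix.sum_apply, sandwich_apply, smul_eq_mul]
  have h : ∀ a : Fin n → Fin 2,
      (∑ b : Fin n → Fin 2, eps b (i + a) * eps b (j + a) * ρ (i + a) (j + a))
        = (if i = j then (2:ℂ)^n else 0) * ρ (i + a) (j + a) := by
    intro a
    rw [← Finset.sum_mul, sum_eps]
    congr 1
    simp [add_left_inj]
  simp only [h]
  by_cases hij : i = j
  · subst hij
    simp only [if_pos rfl, if_true]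
    rw [← Finset.mul_sum]
    have htr' : (∑ a : Fin n → Fin 2, ρ (i + a) (i + a)) = 1 := by
      rw [← htr, Matrix.trace]
      exact Fintype.sum_equiv (Equiv.addLeft i) _ _ (fun a => rfl)
    rw [htr', Matrix.one_apply_eq, mul_one]
    rw [show ((4:ℂ))^n = 2^n * 2^n by rw [← mul_pow]; norm_num]
    field_simp
  · simp [hij, Matrix.one_apply]

end
end

section
/- Homomorphic correctness for Clifford+T circuits on product encryption: let C = Ω₁ ⊗ T ⊗ Ω₃ act on three qubits, where Ω₁, Ω₃ ∈ {X, Z, H, S} and T is replaced in the evaluated circuit by R_z((-1)^{a₂} π/4) on the second qubit. Then applying the replaced circuit to the encrypted state (X^{a₁}Z^{b₁} ⊗ X^{a₂}Z^{b₂} ⊗ X^{a₃}Z^{b₃})|ω⟩ yields, up to a global phase of modulus 1, (X^{a₁'}Z^{b₁'} ⊗ X^{a₂}Z^{b₂} ⊗ X^{a₃'}Z^{b₃'}) C |ω⟩, where (aᵢ', bᵢ') are the updated keys: (a,b) for X, Z; (b,a) for H; (a, a⊕b) for S. -/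
open Matrix Kronecker

noncomputable section

def H : Matrix (Fin 2) (Fin 2) ℂ := ((Real.sqrt 2 : ℂ))⁻¹ • !![1, 1; 1, -1]
def S : Matrix (Fin 2) (Fin 2) ℂ := !![1, 0; 0, Complex.I]
def T : Matrix (Fin 2) (Fin 2) ℂ :=
  !![1, 0; 0, Complex.exp (Complex.I * (Real.pi / 4))]
def Rz (θ : ℝ) : Matrix (Fin 2) (Fin 2) ℂ :=
  !![Complex.exp (-(Complex.I * θ / 2)), 0; 0, Complex.exp (Complex.I * θ / 2)]

/-- QOTP encryption operator `X^a Z^b`. -/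
def enc (a b : Fin 2) : Matrix (Fin 2) (Fin 2) ℂ := X ^ (a : ℕ) * Z ^ (b : ℕ)

/-- The key-update rule: `(a,b) ↦ (a,b)` for `X` and `Z`, `(a,b) ↦ (b,a)` for `H`,
and `(a,b) ↦ (a, a⊕b)` for `S`. -/
def KeyUpd (Ω : Matrix (Fin 2) (Fin 2) ℂ) (a b a' b' : Fin 2) : Prop :=
  ((Ω = X ∨ Ω = Z) ∧ a' = a ∧ b' = b) ∨
    (Ω = H ∧ a' = b ∧ b' = a) ∨
    (Ω = S ∧ a' = a ∧ b' = a + b)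

lemma comm_X (a b : Fin 2) : X * enc a b = ((-1 : ℂ) ^ (b:ℕ)) • (enc a b * X) := by
  fin_cases a <;> fin_cases b <;>
    simp [enc, X, Z] <;>
    ext i j <;> fin_cases i <;> fin_cases j <;>
    simp [Matrix.mul_apply, Fin.sum_univ_succ] <;> ring

lemma comm_Z (a b : Fin 2) : Z * enc a b = ((-1 : ℂ) ^ (a:ℕ)) • (enc a b * Z) := by
  fin_cases a <;> fin_cases b <;>
    simp [enc, X, Z] <;>
    ext i j <;> fin_cases i <;> fin_cases j <;>
    simp [Matrix.mul_apply, Fin.sum_univ_succ] <;> ring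

lemma comm_H (a b : Fin 2) : H * enc a b = ((-1 : ℂ) ^ ((a:ℕ) * (b:ℕ))) • (enc b a * H) := by
  fin_cases a <;> fin_cases b <;>
    simp [enc, X, Z, H, Matrix.smul_mul, Matrix.mul_smul] <;>
    ext i j <;> fin_cases i <;> fin_cases j <;>
    simp [Matrix.mul_apply, Fin.sum_univ_succ] <;> ring

lemma comm_S (a b : Fin 2) : S * enc a b = (Complex.I ^ (a:ℕ)) • (enc a (a + b) * S) := by
  fin_cases a <;> fin_cases b <;>
    simp [enc, X, Z, S] <;>
    ext i j <;> fin_cases i <;> fin_cases j <;>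
    simp [Matrix.mul_apply, Fin.sum_univ_succ, Complex.ext_iff] <;> ring_nf <;>
    simp [Complex.I_sq, Complex.ext_iff]

lemma comm_Rz (a b : Fin 2) :
    Rz ((-1 : ℝ) ^ (a : ℕ) * (Real.pi / 4)) * enc a b
      = Complex.exp (-(Complex.I * (Real.pi / 8))) • (enc a b * T) := by
  fin_cases a <;> fin_cases b <;>
    ext i j <;> fin_cases i <;> fin_cases j <;>
    simp [enc, X, Z, T, Rz, Matrix.mul_apply, Fin.sum_univ_succ, ← Complex.exp_add] <;>
    (try ring_nf) <;> (try norm_num) <;>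
    congr 1 <;> push_cast <;> ring

lemma key_comm {Ω : Matrix (Fin 2) (Fin 2) ℂ} {a b a' b' : Fin 2}
    (h : KeyUpd Ω a b a' b') :
    ∃ c : ℂ, ‖c‖ = 1 ∧ Ω * enc a b = c • (enc a' b' * Ω) := by
  rcases h with ⟨hΩ | hΩ, ha, hb⟩ | ⟨hΩ, ha, hb⟩ | ⟨hΩ, ha, hb⟩
  · exact ⟨(-1 : ℂ) ^ (b:ℕ), by simp, by rw [hΩ, ha, hb]; exact comm_X a b⟩
  · exact ⟨(-1 : ℂ) ^ (a:ℕ), by simp, by rw [hΩ, ha, hb]; exact comm_Z a b⟩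
  · exact ⟨(-1 : ℂ) ^ ((a:ℕ)*(b:ℕ)), by simp, by rw [hΩ, ha, hb]; exact comm_H a b⟩
  · exact ⟨Complex.I ^ (a:ℕ), by simp, by rw [hΩ, ha, hb]; exact comm_S a b⟩

/-- homomorphic correctness for the circuit `C = Ω₁ ⊗ T ⊗ Ω₃` with the `T`-gate
replaced by `R_z((-1)^{a₂} π/4)`: applying the replaced circuit to the encrypted state yields,
up to a global phase of modulus 1, the re-encryption (with updated keys) of `C |ω⟩`. -/
theorem homomorphic_correctness_clifford_T
    (Ω₁ Ω₃ : Matrix (Fin 2) (Fin 2) ℂ)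
    (a₁ b₁ a₂ b₂ a₃ b₃ a₁' b₁' a₃' b₃' : Fin 2)
    (h₁ : KeyUpd Ω₁ a₁ b₁ a₁' b₁') (h₃ : KeyUpd Ω₃ a₃ b₃ a₃' b₃') :
    ∃ c : ℂ, ‖c‖ = 1 ∧
      ∀ ω : Fin 2 × Fin 2 × Fin 2 → ℂ,
        (Ω₁ ⊗ₖ (Rz ((-1 : ℝ) ^ (a₂ : ℕ) * (Real.pi / 4)) ⊗ₖ Ω₃)).mulVec
            ((enc a₁ b₁ ⊗ₖ (enc a₂ b₂ ⊗ₖ enc a₃ b₃)).mulVec ω) =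
          c • (enc a₁' b₁' ⊗ₖ (enc a₂ b₂ ⊗ₖ enc a₃' b₃')).mulVec
            ((Ω₁ ⊗ₖ (T ⊗ₖ Ω₃)).mulVec ω) := by
  obtain ⟨c₁, hc₁, e₁⟩ := key_comm h₁
  obtain ⟨c₃, hc₃, e₃⟩ := key_comm h₃
  set c₂ : ℂ := Complex.exp (-(Complex.I * (Real.pi / 8))) with hc₂def
  have hc₂ : ‖c₂‖ = 1 := by
    rw [hc₂def]
    rw [Complex.norm_exp]
    norm_num
  refine ⟨c₁ * (c₂ * c₃), by simp [hc₁, hc₂, hc₃], fun ω => ?_⟩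
  have key : (Ω₁ ⊗ₖ (Rz ((-1 : ℝ) ^ (a₂ : ℕ) * (Real.pi / 4)) ⊗ₖ Ω₃)) *
      (enc a₁ b₁ ⊗ₖ (enc a₂ b₂ ⊗ₖ enc a₃ b₃)) =
      (c₁ * (c₂ * c₃)) • ((enc a₁' b₁' ⊗ₖ (enc a₂ b₂ ⊗ₖ enc a₃' b₃')) * (Ω₁ ⊗ₖ (T ⊗ₖ Ω₃))) := by
    rw [← Matrix.mul_kronecker_mul, ← Matrix.mul_kronecker_mul, e₁, comm_Rz, e₃,
        ← Matrix.mul_kronecker_mul, ← Matrix.mul_kronecker_mul]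
    simp [hc₂def, Matrix.smul_kronecker, Matrix.kronecker_smul, smul_smul, mul_comm, mul_assoc, mul_left_comm]
  rw [Matrix.mulVec_mulVec, key, Matrix.smul_mulVec, ← Matrix.mulVec_mulVec]

end
end
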